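/- For a commutative ring R, the functor sending an R-module M to the functor M~ on the category M(R) of finitely generated free R-modules defined by M~(M₁) = Hom_R(M₁*, M) gives an equivalence between the category of R-modules and the category of R-linear additive functors from M(R) to R-modules. -/

import Mathlib

open CategoryTheory

/-- The category `M(R)` of finitely generated free `R`-modules. -/
abbrev FFMod (R : Type) [CommRing R] :=
  ObjectProperty.FullSubcategory (fun M : ModuleCat.{0} R => Module.Finite R M ∧ Module.Free R M)

/-- The duality functor `M₁ ↦ M₁* = Hom_R(M₁, R)` on `M(R)`, with values in
`(ModuleCat R)ᵒᵖ`. -/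
@[simps] def dualFF (R : Type) [CommRing R] : FFMod R ⥤ (ModuleCat R)ᵒᵖ where
  obj M := Opposite.op (ModuleCat.of R (M.obj →ₗ[R] R))
  map {M N} f := (ModuleCat.ofHom (LinearMap.dualMap f.hom.hom)).op
  map_id := by intro M; rfl
  map_comp := by intro M N P f g; rfl

/-- The functor sending an `R`-module `M` to the functor
`M~ : M(R) ⥤ R-mod`, `M~(M₁) = Hom_R(M₁*, M)`. -/
noncomputable def tildeFun (R : Type) [CommRing R] :
    ModuleCat R ⥤ FFMod R ⥤ ModuleCat R :=
  linearYoneda R (ModuleCat R) ⋙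
    (Functor.whiskeringLeft (FFMod R) (ModuleCat R)ᵒᵖ (ModuleCat R)).obj (dualFF R)

section Tilde
variable (R : Type) [CommRing R]

def Rhat : FFMod R := ⟨ModuleCat.of R R,
  inferInstanceAs (Module.Finite R R), inferInstanceAs (Module.Free R R)⟩

variable {R}

/-- A linear functional on `M₁` as a morphism to `Rhat` in `FFMod R`. -/
def toR {M₁ : FFMod R} (l : M₁.obj →ₗ[R] R) : M₁ ⟶ Rhat R :=
  ObjectProperty.homMk (ModuleCat.ofHom l)

@[simp] lemma toR_add {M₁ : FFMod R} (l l' : M₁.obj →ₗ[R] R) :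
    toR (l + l') = toR l + toR l' := rfl
@[simp] lemma toR_smul {M₁ : FFMod R} (r : R) (l : M₁.obj →ₗ[R] R) :
    toR (r • l) = r • toR l := rfl

def alphaApp (F : FFMod R ⥤ ModuleCat.{0} R) [F.Additive] [Functor.Linear R F] (M₁ : FFMod R) :
    F.obj M₁ →ₗ[R] (ModuleCat.of R (M₁.obj →ₗ[R] R) ⟶ F.obj (Rhat R)) where
  toFun x := ModuleCat.ofHom
    { toFun := fun l => F.map (toR l) x
      map_add' := by
        intro l l'
        show F.map (toR (l + l')) x = F.map (toR l) x + F.map (toR l') x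
        rw [toR_add, F.map_add]; rfl
      map_smul' := by
        intro r l
        show F.map (toR (r • l)) x = r • F.map (toR l) x
        rw [toR_smul, Functor.map_smul]; rfl }
  map_add' := by
    intro x y; ext l
    show F.map (toR l) (x + y) = F.map (toR l) x + F.map (toR l) y
    exact LinearMap.map_add _ x y
  map_smul' := by
    intro r x; ext l
    show F.map (toR l) (r • x) = r • F.map (toR l) x
    exact LinearMap.map_smul _ r x

lemma hom_sum_apply {A B : ModuleCat.{0} R} {ι : Type} (s : Finset ι)
    (f : ι → (A ⟶ B)) (x : A) : (∑ i ∈ s, f i) x = ∑ i ∈ s, f i x := by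
  change (∑ i ∈ s, f i).hom x = _
  rw [ModuleCat.hom_sum, LinearMap.coe_sum, Finset.sum_apply]

lemma ff_hom_sum {A B : FFMod R} {ι : Type} (s : Finset ι)
    (f : ι → (A ⟶ B)) : (∑ i ∈ s, f i).hom = ∑ i ∈ s, (f i).hom :=
  (ObjectProperty.ι _).map_sum f s

lemma alphaApp_bijective (F : FFMod R ⥤ ModuleCat.{0} R) [F.Additive] [Functor.Linear R F]
    (M₁ : FFMod R) : Function.Bijective (alphaApp F M₁) := by
  haveI := M₁.property.1
  haveI := M₁.property.2
  let b := Module.Free.chooseBasis R M₁.obj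
  set ι := Module.Free.ChooseBasisIndex R M₁.obj
  let σ : ι → (Rhat R ⟶ M₁) := fun i =>
    ObjectProperty.homMk (ModuleCat.ofHom (LinearMap.toSpanSingleton R M₁.obj (b i)))
  have hid : (𝟙 M₁ : M₁ ⟶ M₁) = ∑ i, toR (b.coord i) ≫ σ i := by
    refine ObjectProperty.hom_ext _ (ModuleCat.hom_ext (LinearMap.ext fun m => ?_))
    rw [ff_hom_sum, ModuleCat.hom_sum, LinearMap.coe_sum, Finset.sum_apply]
    show m = ∑ i, (b.coord i m) • b i
    exact (b.sum_repr m).symm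
  have key : ∀ x : F.obj M₁, x = ∑ i, F.map (σ i) (F.map (toR (b.coord i)) x) := by
    intro x
    conv_lhs => rw [show x = F.map (𝟙 M₁) x by rw [F.map_id]; rfl]
    rw [hid, Functor.map_sum]
    rw [hom_sum_apply (R := R) Finset.univ (fun a => F.map (toR (b.coord a) ≫ σ a)) x]
    refine Finset.sum_congr rfl fun i _ => ?_
    rw [F.map_comp]; rfl
  constructor
  · intro x y hxy
    have h : ∀ l : M₁.obj →ₗ[R] R, F.map (toR l) x = F.map (toR l) y := by
      intro l
      have := congrArg (fun φ => φ l) hxy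
      exact this
    rw [key x, key y]
    exact Finset.sum_congr rfl fun i _ => by rw [h]
  · intro φ
    refine ⟨∑ i, F.map (σ i) (φ (b.coord i)), ?_⟩
    ext l
    show F.map (toR l) (∑ i, F.map (σ i) (φ (b.coord i))) = φ l
    rw [map_sum]
    have step : ∀ i, F.map (toR l) (F.map (σ i) (φ (b.coord i))) = (l (b i)) • φ (b.coord i) := by
      intro i
      have hcomp : σ i ≫ toR l = (l (b i)) • 𝟙 (Rhat R) := by
        refine ObjectProperty.hom_ext _ (ModuleCat.hom_ext (LinearMap.ext fun (r : R) => ?_))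
        show l (r • b i) = l (b i) • r
        rw [map_smul, smul_eq_mul, smul_eq_mul, mul_comm]
      calc F.map (toR l) (F.map (σ i) (φ (b.coord i)))
          = (F.map (σ i) ≫ F.map (toR l)) (φ (b.coord i)) := rfl
        _ = _ := by rw [← F.map_comp, hcomp, Functor.map_smul, F.map_id]; rfl
    rw [Finset.sum_congr rfl fun i _ => step i]
    have : ∑ i, l (b i) • φ (b.coord i) = φ (∑ i, l (b i) • b.coord i) := by
      rw [map_sum]
      exact Finset.sum_congr rfl fun i _ => by rw [map_smul]
    rw [this, b.sum_dual_apply_smul_coord]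

instance tildeAdd (M : ModuleCat.{0} R) : ((tildeFun R).obj M).Additive where
  map_add := by
    intro M₁ M₂ f g
    refine ModuleCat.hom_ext (LinearMap.ext fun (φ : ModuleCat.of R (M₁.obj →ₗ[R] R) ⟶ M) =>
      ModuleCat.hom_ext (LinearMap.ext fun (l : M₂.obj →ₗ[R] R) => ?_))
    show φ (l.comp ((f.hom.hom) + g.hom.hom)) = φ (l.comp f.hom.hom) + φ (l.comp g.hom.hom)
    rw [LinearMap.comp_add, map_add]

instance tildeLin (M : ModuleCat.{0} R) : Functor.Linear R ((tildeFun R).obj M) where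
  map_smul := by
    intro M₁ M₂ f r
    refine ModuleCat.hom_ext (LinearMap.ext fun (φ : ModuleCat.of R (M₁.obj →ₗ[R] R) ⟶ M) =>
      ModuleCat.hom_ext (LinearMap.ext fun (l : M₂.obj →ₗ[R] R) => ?_))
    show φ (l.comp (r • f.hom.hom)) = r • φ (l.comp f.hom.hom)
    rw [LinearMap.comp_smul, map_smul]

variable (R)

abbrev PAddLin : (FFMod R ⥤ ModuleCat.{0} R) → Prop := fun F =>
  ∃ h : F.Additive, @Functor.Linear R _ _ _ _ _ _ _ _ _ F

noncomputable def TFun : ModuleCat.{0} R ⥤ ObjectProperty.FullSubcategory (PAddLin R) :=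
  ObjectProperty.lift _ (tildeFun R) (fun M => ⟨tildeAdd M, tildeLin M⟩)

noncomputable def SFun : ObjectProperty.FullSubcategory (PAddLin R) ⥤ ModuleCat.{0} R :=
  ObjectProperty.ι _ ⋙ (evaluation (FFMod R) (ModuleCat.{0} R)).obj (Rhat R)

def unitHomAux (M : ModuleCat.{0} R) : (M : Type) →ₗ[R] (ModuleCat.of R (R →ₗ[R] R) ⟶ M) where
  toFun m := ModuleCat.ofHom
    { toFun := fun l => l (1:R) • m
      map_add' := by
        intro l l'
        show (l + l') (1:R) • m = l (1:R) • m + l' (1:R) • m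
        rw [LinearMap.add_apply, add_smul]
      map_smul' := by
        intro r l
        show (r • l) (1:R) • m = r • (l (1:R) • m)
        rw [LinearMap.smul_apply, smul_eq_mul, mul_smul] }
  map_add' := by intro m m'; refine ModuleCat.hom_ext (LinearMap.ext fun l => ?_); exact smul_add _ m m'
  map_smul' := by intro r m; refine ModuleCat.hom_ext (LinearMap.ext fun l => ?_); exact smul_comm _ r m

def unitHom (M : ModuleCat.{0} R) : M ⟶ (TFun R ⋙ SFun R).obj M := ModuleCat.ofHom (unitHomAux R M)

def unitInvAux (M : ModuleCat.{0} R) : (ModuleCat.of R (R →ₗ[R] R) ⟶ M) →ₗ[R] (M : Type) where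
  toFun φ := φ (LinearMap.id : R →ₗ[R] R)
  map_add' := by intro φ ψ; rfl
  map_smul' := by intro r φ; rfl

def unitInv (M : ModuleCat.{0} R) : (TFun R ⋙ SFun R).obj M ⟶ M := ModuleCat.ofHom (unitInvAux R M)

lemma ringHom_eq (l : R →ₗ[R] R) : l = l (1:R) • (LinearMap.id : R →ₗ[R] R) := by
  refine LinearMap.ext fun (r : R) => ?_
  show l r = l (1:R) * r
  rw [mul_comm]
  calc l r = l (r • (1:R)) := by rw [smul_eq_mul, mul_one]
    _ = r * l (1:R) := by rw [map_smul]; rfl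

noncomputable def unitIso : 𝟭 (ModuleCat.{0} R) ≅ TFun R ⋙ SFun R :=
  NatIso.ofComponents (fun M =>
    { hom := unitHom R M
      inv := unitInv R M
      hom_inv_id := by
        refine ModuleCat.hom_ext (LinearMap.ext fun m => ?_)
        show (LinearMap.id : R →ₗ[R] R) (1:R) • m = m
        exact one_smul R m
      inv_hom_id := by
        refine ModuleCat.hom_ext (LinearMap.ext fun (φ : ModuleCat.of R (R →ₗ[R] R) ⟶ M) =>
          ModuleCat.hom_ext (LinearMap.ext fun (l : R →ₗ[R] R) => ?_))
        show l (1:R) • φ LinearMap.id = φ l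
        rw [← map_smul]
        exact congrArg φ (ringHom_eq R l).symm })
    (by
      intro M N g
      refine ModuleCat.hom_ext (LinearMap.ext fun m =>
        ModuleCat.hom_ext (LinearMap.ext fun (l : R →ₗ[R] R) => ?_))
      show l (1:R) • g m = g (l (1:R) • m)
      rw [map_smul])

variable {R}

/-- The canonical natural transformation `F ⟶ (F(R))~`. -/
noncomputable def alphaNat (F : FFMod R ⥤ ModuleCat.{0} R) [F.Additive] [Functor.Linear R F] :
    F ⟶ (tildeFun R).obj (F.obj (Rhat R)) where
  app M₁ := ModuleCat.ofHom (alphaApp F M₁)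
  naturality := by
    intro M₁ M₂ f
    refine ModuleCat.hom_ext (LinearMap.ext fun x =>
      ModuleCat.hom_ext (LinearMap.ext fun (l : M₂.obj →ₗ[R] R) => ?_))
    show F.map (toR l) (F.map f x) = F.map (toR (l.comp f.hom.hom)) x
    rw [show toR (l.comp f.hom.hom) = f ≫ toR l from rfl, F.map_comp]
    rfl

instance alphaNat_app_isIso (F : FFMod R ⥤ ModuleCat.{0} R) [F.Additive] [Functor.Linear R F]
    (M₁ : FFMod R) : IsIso ((alphaNat F).app M₁) := by
  have : Function.Bijective ((alphaNat F).app M₁) := alphaApp_bijective F M₁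
  exact (ConcreteCategory.isIso_iff_bijective _).mpr this

instance alphaNat_isIso (F : FFMod R ⥤ ModuleCat.{0} R) [F.Additive] [Functor.Linear R F] :
    IsIso (alphaNat F) := NatIso.isIso_of_isIso_app _

lemma alphaNat_natural {F G : FFMod R ⥤ ModuleCat.{0} R} [F.Additive] [Functor.Linear R F]
    [G.Additive] [Functor.Linear R G] (t : F ⟶ G) :
    t ≫ alphaNat G = alphaNat F ≫ (tildeFun R).map (t.app (Rhat R)) := by
  refine NatTrans.ext (funext fun M₁ => ModuleCat.hom_ext (LinearMap.ext fun x =>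
    ModuleCat.hom_ext (LinearMap.ext fun (l : M₁.obj →ₗ[R] R) => ?_)))
  show G.map (toR l) (t.app M₁ x) = t.app (Rhat R) (F.map (toR l) x)
  exact congrArg (fun (g : F.obj M₁ ⟶ G.obj (Rhat R)) => g x) (t.naturality (toR l)).symm

variable (R)

noncomputable def alphaIsoSub (F : ObjectProperty.FullSubcategory (PAddLin R)) :
    F ≅ (SFun R ⋙ TFun R).obj F := by
  letI h1 := F.property.choose
  letI h2 := F.property.choose_spec
  letI h3 : IsIso (alphaNat F.1) := @alphaNat_isIso R _ F.1 h1 h2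
  exact
    { hom := ObjectProperty.homMk (alphaNat F.1)
      inv := ObjectProperty.homMk
        (inv (alphaNat F.1) : (tildeFun R).obj (F.1.obj (Rhat R)) ⟶ F.1)
      hom_inv_id := ObjectProperty.hom_ext _ (@IsIso.hom_inv_id _ _ _ _ (alphaNat F.1) h3)
      inv_hom_id := ObjectProperty.hom_ext _ (@IsIso.inv_hom_id _ _ _ _ (alphaNat F.1) h3) }

noncomputable def counitIso : SFun R ⋙ TFun R ≅ 𝟭 (ObjectProperty.FullSubcategory (PAddLin R)) := by
  refine NatIso.ofComponents (fun F => (alphaIsoSub R F).symm) ?_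
  intro F G t
  letI h1 := F.property.choose
  letI h2 := F.property.choose_spec
  letI h1' := G.property.choose
  letI h2' := G.property.choose_spec
  have hnat : t ≫ (alphaIsoSub R G).hom = (alphaIsoSub R F).hom ≫ (SFun R ⋙ TFun R).map t :=
    ObjectProperty.hom_ext _ (@alphaNat_natural R _ F.1 G.1 h1 h2 h1' h2' t.hom)
  simp only [Functor.id_map]
  rw [Iso.symm_hom, Iso.symm_hom, Iso.comp_inv_eq, Category.assoc, hnat, ← Category.assoc,
    Iso.inv_hom_id, Category.id_comp]

end Tilde

/-- the assignment `M ↦ M~`, where `M~(M₁) = Hom_R(M₁*, M)`, gives an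
equivalence between the category of `R`-modules and the category of `R`-linear additive
functors from `M(R)` to `R`-modules. -/
theorem tilde_equivalence_additive_linear_functors (R : Type) [CommRing R] :
    (∀ M : ModuleCat R, ∃ h : ((tildeFun R).obj M).Additive,
      @Functor.Linear R _ _ _ _ _ _ _ _ _ ((tildeFun R).obj M)) ∧
    ∃ T : ModuleCat R ⥤ ObjectProperty.FullSubcategory
        (fun F : FFMod R ⥤ ModuleCat R =>
          ∃ h : F.Additive, @Functor.Linear R _ _ _ _ _ _ _ _ _ F),
      (∀ M : ModuleCat R, (T.obj M).obj = (tildeFun R).obj M) ∧ T.IsEquivalence := by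
  constructor
  · intro M
    exact ⟨tildeAdd M, tildeLin M⟩
  · refine ⟨TFun R, fun M => rfl, ?_⟩
    exact (CategoryTheory.Equivalence.mk (TFun R) (SFun R)
      (unitIso R) (counitIso R)).isEquivalence_functor
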